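/- Let K ⊂ ℝ be compact, M > 0, and f₊ an M-transfer function. Let φ : ℝ × 𝒫 → ℝ be a basis function such that each φ(·; p) restricted to K is continuous, and suppose: (1) Σ(φ) is closed under pointwise products and under multiplication by real scalars (so that Σ(φ), restricted to K, is a subalgebra of C(K, ℝ)); (2) for any distinct x, y ∈ K there exists p ∈ 𝒫 with φ(x; p) ≠ φ(y; p); (3) for every x₀ ∈ K there exists p ∈ 𝒫 with φ(x₀; p) ≠ 0. Then the class f₊ ∘ Σ(φ) = {f₊ ∘ h : h ∈ Σ(φ)} is uniformly dense in C(K, ℝ₊₊). -/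

import Mathlib

/-- The class `Σ(φ)` of finite sums of basis functions `φ(·; p)`. -/
def SumBasis {P : Type*} (φ : ℝ → P → ℝ) : Set (ℝ → ℝ) :=
  {h : ℝ → ℝ | ∃ (J : ℕ) (p : Fin J → P), ∀ x : ℝ, h x = ∑ j : Fin J, φ x (p j)}

lemma sumBasis_zero {P : Type*} (φ : ℝ → P → ℝ) : (fun _ : ℝ => (0 : ℝ)) ∈ SumBasis φ :=
  ⟨0, Fin.elim0, fun x => by simp⟩

lemma sumBasis_single {P : Type*} (φ : ℝ → P → ℝ) (p : P) :
    (fun x : ℝ => φ x p) ∈ SumBasis φ :=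
  ⟨1, fun _ => p, fun x => by simp⟩

lemma sumBasis_add {P : Type*} (φ : ℝ → P → ℝ) {h₁ h₂ : ℝ → ℝ}
    (H₁ : h₁ ∈ SumBasis φ) (H₂ : h₂ ∈ SumBasis φ) :
    (fun x : ℝ => h₁ x + h₂ x) ∈ SumBasis φ := by
  obtain ⟨J₁, p₁, hp₁⟩ := H₁
  obtain ⟨J₂, p₂, hp₂⟩ := H₂
  exact ⟨J₁ + J₂, Fin.append p₁ p₂, fun x => by
    simp [hp₁ x, hp₂ x, Fin.sum_univ_add, Fin.append_left, Fin.append_right]⟩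

lemma sumBasis_finsum {P : Type*} (φ : ℝ → P → ℝ) {ι : Type*} (t : Finset ι)
    (s : ι → ℝ → ℝ) (hs : ∀ i ∈ t, s i ∈ SumBasis φ) :
    (fun x : ℝ => ∑ i ∈ t, s i x) ∈ SumBasis φ := by
  classical
  induction t using Finset.induction_on with
  | empty => simpa using sumBasis_zero φ
  | insert _ _ hni ih =>
    rename_i a t'
    simp only [Finset.sum_insert hni]
    exact sumBasis_add φ (hs a (Finset.mem_insert_self a t'))
      (ih fun i hi => hs i (Finset.mem_insert_of_mem hi))

lemma sumBasis_continuousOn {P : Type*} (φ : ℝ → P → ℝ) (K : Set ℝ)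
    (hφ_cont : ∀ p : P, ContinuousOn (fun x => φ x p) K)
    {h : ℝ → ℝ} (H : h ∈ SumBasis φ) : ContinuousOn h K := by
  obtain ⟨J, p, hp⟩ := H
  have : ContinuousOn (fun x => ∑ j : Fin J, φ x (p j)) K :=
    continuousOn_finset_sum _ fun j _ => hφ_cont (p j)
  exact this.congr fun x _ => hp x

/-- The unital subalgebra `ℝ·1 + Σ(φ)|K` of `C(K, ℝ)`. -/
def transferAlg {P : Type*} (φ : ℝ → P → ℝ) (K : Set ℝ)
    (hmul : ∀ h₁ ∈ SumBasis φ, ∀ h₂ ∈ SumBasis φ,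
      ∃ h₃ ∈ SumBasis φ, ∀ x ∈ K, h₃ x = h₁ x * h₂ x)
    (hsmul : ∀ c : ℝ, ∀ h ∈ SumBasis φ,
      ∃ h' ∈ SumBasis φ, ∀ x ∈ K, h' x = c * h x) :
    Subalgebra ℝ C(↥K, ℝ) where
  carrier := {F | ∃ c : ℝ, ∃ h ∈ SumBasis φ, ∀ x : ↥K, F x = c + h x}
  zero_mem' := ⟨0, _, sumBasis_zero φ, fun x => by simp⟩
  one_mem' := ⟨1, _, sumBasis_zero φ, fun x => by simp⟩
  add_mem' := by
    rintro F G ⟨c, h, hh, hF⟩ ⟨c', h', hh', hG⟩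
    exact ⟨c + c', _, sumBasis_add φ hh hh', fun x => by
      simp [hF x, hG x]; ring⟩
  mul_mem' := by
    rintro F G ⟨c, h, hh, hF⟩ ⟨c', h', hh', hG⟩
    obtain ⟨u, hu, huK⟩ := hsmul c h' hh'
    obtain ⟨v, hv, hvK⟩ := hsmul c' h hh
    obtain ⟨w, hw, hwK⟩ := hmul h hh h' hh'
    refine ⟨c * c', _, sumBasis_add φ (sumBasis_add φ hu hv) hw, fun x => ?_⟩
    simp only [ContinuousMap.mul_apply, hF x, hG x, huK x.1 x.2, hvK x.1 x.2, hwK x.1 x.2]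
    ring
  algebraMap_mem' := fun c => ⟨c, _, sumBasis_zero φ, fun x => by simp⟩

theorem basis_stone_weierstrass_transfer
    {P : Type*} (K : Set ℝ) (hK : IsCompact K) (M : ℝ) (hM : 0 < M)
    (fp : ℝ → ℝ)
    (hfp_nonneg : ∀ x : ℝ, 0 ≤ fp x)
    (hfp_lip : ∀ x y : ℝ, |fp x - fp y| ≤ M * |x - y|)
    (hfp_range : ∀ y : ℝ, 0 < y → ∃ x : ℝ, fp x = y)
    (hfp_mono : StrictMonoOn fp {x : ℝ | 0 < fp x})
    (φ : ℝ → P → ℝ)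
    (hφ_cont : ∀ p : P, ContinuousOn (fun x => φ x p) K)
    (hmul : ∀ h₁ ∈ SumBasis φ, ∀ h₂ ∈ SumBasis φ,
      ∃ h₃ ∈ SumBasis φ, ∀ x ∈ K, h₃ x = h₁ x * h₂ x)
    (hsmul : ∀ c : ℝ, ∀ h ∈ SumBasis φ,
      ∃ h' ∈ SumBasis φ, ∀ x ∈ K, h' x = c * h x)
    (hsep : ∀ x ∈ K, ∀ y ∈ K, x ≠ y → ∃ p : P, φ x p ≠ φ y p)
    (hnonzero : ∀ x₀ ∈ K, ∃ p : P, φ x₀ p ≠ 0) :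
    ∀ f : ℝ → ℝ, ContinuousOn f K → (∀ x ∈ K, 0 < f x) →
      ∀ ε : ℝ, 0 < ε → ∃ h ∈ SumBasis φ, ∀ x ∈ K, |fp (h x) - f x| < ε := by
  intro f hf hfpos ε hε
  classical
  rcases K.eq_empty_or_nonempty with rfl | hKne
  · exact ⟨_, sumBasis_zero φ, fun x hx => absurd hx (Set.notMem_empty x)⟩
  haveI : CompactSpace ↥K := isCompact_iff_compactSpace.mp hK
  -- fp is continuous
  have hfp_cont : Continuous fp := by
    refine LipschitzWith.continuous (K := M.toNNReal) ?_
    intro x y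
    have := hfp_lip x y
    simp only [edist_dist, Real.dist_eq]
    rw [← ENNReal.ofReal_coe_nnreal]
    rw [← ENNReal.ofReal_mul (by positivity)]
    exact ENNReal.ofReal_le_ofReal (by
      rw [Real.coe_toNNReal _ hM.le]; exact this)
  -- min and max of f on K
  obtain ⟨xm, hxm, hmin⟩ := hK.exists_isMinOn hKne hf
  obtain ⟨xM, hxM, hmax⟩ := hK.exists_isMaxOn hKne hf
  set m := f xm with hm_def
  set B := f xM with hB_def
  have hm_pos : 0 < m := hfpos xm hxm
  have hmB : m ≤ B := hmin hxM
  have hB_pos : 0 < B := lt_of_lt_of_le hm_pos hmB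
  obtain ⟨a, ha⟩ := hfp_range m hm_pos
  obtain ⟨b, hb⟩ := hfp_range B hB_pos
  have haS : a ∈ {x : ℝ | 0 < fp x} := by simp [ha, hm_pos]
  have hbS : b ∈ {x : ℝ | 0 < fp x} := by simp [hb, hB_pos]
  have hab : a ≤ b := by
    by_contra hba
    push_neg at hba
    have := hfp_mono hbS haS hba
    rw [ha, hb] at this
    exact absurd this (not_lt.mpr hmB)
  -- Icc a b ⊆ positivity set of fp
  have hIccS : Set.Icc a b ⊆ {x : ℝ | 0 < fp x} := by
    intro c hc
    by_contra hc0
    have hc0 : fp c = 0 := le_antisymm (not_lt.mp hc0) (hfp_nonneg c)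
    rcases eq_or_lt_of_le hc.1 with rfl | hac
    · rw [hc0] at ha; exact absurd ha.symm (ne_of_gt hm_pos)
    · have hsub : Set.Icc (fp c) (fp b) ⊆ fp '' Set.Icc c b :=
        intermediate_value_Icc hc.2 hfp_cont.continuousOn
      have hmmem : m ∈ Set.Icc (fp c) (fp b) := by
        rw [hc0, hb]; exact ⟨hm_pos.le, hmB⟩
      obtain ⟨x, hx, hfx⟩ := hsub hmmem
      have hxS : x ∈ {x : ℝ | 0 < fp x} := by simp [hfx, hm_pos]
      have hax : a < x := lt_of_lt_of_le hac hx.1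
      have := hfp_mono haS hxS hax
      rw [ha, hfx] at this
      exact lt_irrefl m this
  -- the order structure: fp strictly mono on Icc a b
  have hmono : StrictMonoOn fp (Set.Icc a b) := hfp_mono.mono hIccS
  -- fp maps Icc a b into Icc m B
  have hmapsto : ∀ x ∈ Set.Icc a b, fp x ∈ Set.Icc m B := by
    intro x hx
    constructor
    · rw [← ha]
      rcases eq_or_lt_of_le hx.1 with rfl | h
      · exact le_refl _
      · exact (hmono ⟨le_refl a, hab⟩ hx h).le
    · rw [← hb]
      rcases eq_or_lt_of_le hx.2 with rfl | h
      · exact le_refl _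
      · exact (hmono hx ⟨hab, le_refl b⟩ h).le
  -- surjectivity onto Icc m B
  have hsurj : Set.Icc m B ⊆ fp '' Set.Icc a b := by
    rw [← ha, ← hb]
    exact intermediate_value_Icc hab hfp_cont.continuousOn
  -- build the homeomorphism
  have hbij : Function.Bijective (fun x : ↥(Set.Icc a b) =>
      (⟨fp x.1, hmapsto x.1 x.2⟩ : ↥(Set.Icc m B))) := by
    constructor
    · intro x y hxy
      have : fp x.1 = fp y.1 := congrArg Subtype.val hxy
      exact Subtype.ext (hmono.injOn x.2 y.2 this)
    · intro y
      obtain ⟨x, hx, hfx⟩ := hsurj y.2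
      exact ⟨⟨x, hx⟩, Subtype.ext hfx⟩
  let E : ↥(Set.Icc a b) ≃ ↥(Set.Icc m B) := Equiv.ofBijective _ hbij
  have hEcont : Continuous (E : ↥(Set.Icc a b) → ↥(Set.Icc m B)) :=
    Continuous.subtype_mk (hfp_cont.comp continuous_subtype_val) _
  let H : ↥(Set.Icc a b) ≃ₜ ↥(Set.Icc m B) := hEcont.homeoOfEquivCompactToT2
  -- the function g with fp ∘ g = f on K
  have hfmem : ∀ x : ↥K, f x.1 ∈ Set.Icc m B := fun x => ⟨hmin x.2, hmax x.2⟩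
  let g : ↥K → ℝ := fun x => (H.symm ⟨f x.1, hfmem x⟩ : ℝ)
  have hg_cont : Continuous g := by
    apply continuous_subtype_val.comp
    exact H.symm.continuous.comp (Continuous.subtype_mk (hf.restrict) _)
  have hgfp : ∀ x : ↥K, fp (g x) = f x.1 := by
    intro x
    have h1 : H (H.symm ⟨f x.1, hfmem x⟩) = ⟨f x.1, hfmem x⟩ := H.apply_symm_apply _
    have h2 : (H (H.symm ⟨f x.1, hfmem x⟩) : ℝ) = fp (g x) := rfl
    rw [h1] at h2
    exact h2.symm
  -- build strictly positive e ∈ Σ(φ)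
  have hexists_s : ∀ x : ↥K, ∃ s ∈ SumBasis φ, (∀ y ∈ K, 0 ≤ s y) ∧ 0 < s x.1 := by
    intro x
    obtain ⟨p, hp⟩ := hnonzero x.1 x.2
    obtain ⟨s, hs, hsK⟩ := hmul _ (sumBasis_single φ p) _ (sumBasis_single φ p)
    refine ⟨s, hs, fun y hy => by rw [hsK y hy]; exact mul_self_nonneg _, ?_⟩
    rw [hsK x.1 x.2]
    exact mul_self_pos.mpr hp
  choose s hs_mem hs_nonneg hs_pos using hexists_s
  -- finite subcover
  have hcover : (Set.univ : Set ↥K) ⊆ ⋃ x : ↥K, {y : ↥K | 0 < s x y.1} := by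
    intro y _
    exact Set.mem_iUnion.mpr ⟨y, hs_pos y⟩
  have hopen : ∀ x : ↥K, IsOpen {y : ↥K | 0 < s x y.1} := by
    intro x
    have : Continuous fun y : ↥K => s x y.1 :=
      (sumBasis_continuousOn φ K hφ_cont (hs_mem x)).restrict
    exact isOpen_lt continuous_const this
  obtain ⟨t, ht⟩ := isCompact_univ.elim_finite_subcover _ hopen hcover
  let e : ℝ → ℝ := fun y => ∑ x ∈ t, s x y
  have he_mem : e ∈ SumBasis φ := sumBasis_finsum φ t _ fun i _ => hs_mem i
  have he_pos : ∀ y ∈ K, 0 < e y := by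
    intro y hy
    have hmem := ht (Set.mem_univ (⟨y, hy⟩ : ↥K))
    simp only [Set.mem_iUnion, Set.mem_setOf_eq] at hmem
    obtain ⟨x, hxt, hxy⟩ := hmem
    exact Finset.sum_pos' (fun i _ => hs_nonneg i y hy) ⟨x, hxt, hxy⟩
  have he_cont : ContinuousOn e K := sumBasis_continuousOn φ K hφ_cont he_mem
  -- bound on e
  obtain ⟨xe, hxe, hemax⟩ := hK.exists_isMaxOn hKne he_cont
  set Ce := e xe with hCe_def
  have hCe_pos : 0 < Ce := he_pos xe hxe
  -- the subalgebra and Stone-Weierstrass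
  set A := transferAlg φ K hmul hsmul with hA_def
  have hApts : A.SeparatesPoints := by
    intro x y hxy
    obtain ⟨p, hp⟩ := hsep x.1 x.2 y.1 y.2 (fun h => hxy (Subtype.ext h))
    refine ⟨_, ⟨(⟨fun z : ↥K => φ z.1 p, (hφ_cont p).restrict⟩ : C(↥K, ℝ)),
      ⟨0, _, sumBasis_single φ p, fun z => by simp; rfl⟩, rfl⟩, hp⟩
  -- approximate g / e
  have hq_cont : Continuous fun x : ↥K => g x / e x :=
    hg_cont.div (he_cont.restrict) (fun x => (he_pos x.1 x.2).ne')
  set δ := ε / (M * (Ce + 1)) with hδ_def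
  have hδ_pos : 0 < δ := by positivity
  obtain ⟨u, hu⟩ := ContinuousMap.exists_mem_subalgebra_near_continuous_of_separatesPoints
    A hApts _ hq_cont δ hδ_pos
  obtain ⟨c, h₀, hh₀, hu_eq⟩ := u.2
  -- build the approximant h' = (c + h₀) * e
  obtain ⟨v, hv, hvK⟩ := hsmul c e he_mem
  obtain ⟨w, hw, hwK⟩ := hmul h₀ hh₀ e he_mem
  refine ⟨_, sumBasis_add φ hv hw, ?_⟩
  intro x hx
  set X : ↥K := ⟨x, hx⟩
  have hkey : |v x + w x - g X| < ε / M := by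
    have h1 : v x + w x = (c + h₀ x) * e x := by
      rw [hvK x hx, hwK x hx]; ring
    have h2 : g X = (g X / e x) * e x :=
      (div_mul_cancel₀ (g X) (he_pos x hx).ne').symm
    rw [h1, h2, ← sub_mul, abs_mul]
    have h3 : |c + h₀ x - g X / e x| < δ := by
      have := hu X
      rw [hu_eq X] at this
      simpa [Real.norm_eq_abs] using this
    have h4 : |e x| < Ce + 1 := by
      rw [abs_of_pos (he_pos x hx)]
      exact lt_of_le_of_lt (hemax hx) (lt_add_one Ce)
    calc |c + h₀ x - g X / e x| * |e x| < δ * (Ce + 1) :=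
          mul_lt_mul'' h3 h4 (abs_nonneg _) (abs_nonneg _)
      _ = ε / M := by
          rw [hδ_def]; field_simp
  have hfinal : |fp (v x + w x) - f x| ≤ M * |v x + w x - g X| := by
    have := hfp_lip (v x + w x) (g X)
    rwa [hgfp X] at this
  calc |fp (v x + w x) - f x| ≤ M * |v x + w x - g X| := hfinal
    _ < M * (ε / M) := by
        exact mul_lt_mul_of_pos_left hkey hM
    _ = ε := by field_simp
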